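/- Let Θ : U → ℂ be holomorphic on an open set U ⊆ ℂ⁴ and suppose Θ satisfies the second Plebanski (heavenly) equation P(Θ) = 0 on U. Then the pair Θ₀ := −∂Θ/∂y, Θ₁ := ∂Θ/∂x satisfies the hyper-Hermitian equation E₀ = E₁ = 0 on U, and moreover ∂Θ₀/∂x + ∂Θ₁/∂y = 0 on U. -/

import Mathlib

noncomputable section

/-- Points of `ℂ⁴`, with coordinates `p = (x, y, w, z)`. -/
abbrev V4 : Type := ℂ × ℂ × ℂ × ℂ

/-- Coordinate directions. -/
def eX : V4 := (1, 0, 0, 0)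
def eY : V4 := (0, 1, 0, 0)
def eW : V4 := (0, 0, 1, 0)
def eZ : V4 := (0, 0, 0, 1)

/-- Directional (partial) derivative of `f` along the constant direction `v`. -/
def pd (v : V4) (f : V4 → ℂ) : V4 → ℂ := fun p => fderiv ℂ f p v

/-- The hyper-Hermitian expression
`E_C = ∂²Θ_C/∂x∂w + ∂²Θ_C/∂y∂z + (∂Θ₀/∂x − ∂Θ₁/∂y)·∂²Θ_C/∂x∂y
      + (∂Θ₁/∂x)·∂²Θ_C/∂y² − (∂Θ₀/∂y)·∂²Θ_C/∂x²`. -/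
def hhE (Θ0 Θ1 ΘC : V4 → ℂ) : V4 → ℂ := fun p =>
  pd eX (pd eW ΘC) p + pd eY (pd eZ ΘC) p
    + (pd eX Θ0 p - pd eY Θ1 p) * pd eX (pd eY ΘC) p
    + pd eX Θ1 p * pd eY (pd eY ΘC) p
    - pd eY Θ0 p * pd eX (pd eX ΘC) p


/-- The second Plebanski expression
`P(Θ) := ∂²Θ/∂x∂w + ∂²Θ/∂y∂z + (∂²Θ/∂x²)(∂²Θ/∂y²) − (∂²Θ/∂x∂y)²`. -/
def pleb (Θ : V4 → ℂ) : V4 → ℂ := fun p =>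
  pd eX (pd eW Θ) p + pd eY (pd eZ Θ) p
    + pd eX (pd eX Θ) p * pd eY (pd eY Θ) p
    - (pd eX (pd eY Θ) p) ^ 2

open Topology Filter

lemma pd_congr {f g : V4 → ℂ} {p : V4} (h : f =ᶠ[nhds p] g) (v : V4) :
    pd v f p = pd v g p := by
  simp only [pd, h.fderiv_eq]

lemma analyticAt_pd (v : V4) {f : V4 → ℂ} {p : V4} (hf : AnalyticAt ℂ f p) :
    AnalyticAt ℂ (pd v f) p :=
  ((ContinuousLinearMap.apply ℂ ℂ v).analyticAt (fderiv ℂ f p)).comp hf.fderiv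

lemma pd_neg (v : V4) (f : V4 → ℂ) (p : V4) :
    pd v (fun q => -(f q)) p = -(pd v f p) := by
  simp only [pd, fderiv_fun_neg, ContinuousLinearMap.neg_apply]

lemma pd_neg_fun (v : V4) (f : V4 → ℂ) :
    pd v (fun q => -(f q)) = fun p => -(pd v f p) := funext (pd_neg v f)

lemma pd_comm {f : V4 → ℂ} {p : V4} (hf : AnalyticAt ℂ f p) (v w : V4) :
    pd v (pd w f) p = pd w (pd v f) p := by
  have hd : DifferentiableAt ℂ (fderiv ℂ f) p := hf.fderiv.differentiableAt
  have key : ∀ a b : V4, pd a (pd b f) p = fderiv ℂ (fderiv ℂ f) p a b := by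
    intro a b
    have h3 : HasFDerivAt (fun q => (ContinuousLinearMap.apply ℂ ℂ b) (fderiv ℂ f q))
        ((ContinuousLinearMap.apply ℂ ℂ b).comp (fderiv ℂ (fderiv ℂ f) p)) p :=
      (ContinuousLinearMap.apply ℂ ℂ b).hasFDerivAt.comp p hd.hasFDerivAt
    have : pd a (pd b f) p = ((ContinuousLinearMap.apply ℂ ℂ b).comp
        (fderiv ℂ (fderiv ℂ f) p)) a := by
      show fderiv ℂ (fun q => fderiv ℂ f q b) p a = _
      rw [show (fun q => fderiv ℂ f q b)
          = (fun q => (ContinuousLinearMap.apply ℂ ℂ b) (fderiv ℂ f q)) from rfl, h3.fderiv]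
    simpa using this
  rw [key, key]
  exact (hf.contDiffAt (n := 2)).isSymmSndFDerivAt (by simp [minSmoothness_of_isRCLikeNormedField]) v w

lemma pd_comm_ev {f : V4 → ℂ} {p : V4} (hf : AnalyticAt ℂ f p) (v w : V4) :
    pd v (pd w f) =ᶠ[nhds p] pd w (pd v f) :=
  hf.eventually_analyticAt.mono fun _ hq => pd_comm hq v w

lemma pd_expand (v : V4) {a b c d e : V4 → ℂ} {p : V4}
    (ha : DifferentiableAt ℂ a p) (hb : DifferentiableAt ℂ b p)
    (hc : DifferentiableAt ℂ c p) (hd : DifferentiableAt ℂ d p)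
    (he : DifferentiableAt ℂ e p) :
    pd v (fun q => a q + b q + c q * d q - (e q) ^ 2) p
      = pd v a p + pd v b p + (pd v c p * d p + c p * pd v d p)
        - 2 * e p * pd v e p := by
  have H := ((ha.hasFDerivAt.add hb.hasFDerivAt).add
      (hc.hasFDerivAt.mul hd.hasFDerivAt)).sub (he.hasFDerivAt.mul he.hasFDerivAt)
  show fderiv ℂ (fun q => a q + b q + c q * d q - e q ^ 2) p v = _
  rw [show (fun q => a q + b q + c q * d q - e q ^ 2)
      = (fun q => a q + b q + c q * d q - e q * e q) from funext fun q => by ring,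
    HasFDerivAt.fderiv (f := fun q => a q + b q + c q * d q - e q * e q) H]
  simp only [pd, ContinuousLinearMap.sub_apply, ContinuousLinearMap.add_apply,
    ContinuousLinearMap.smul_apply, smul_eq_mul]
  ring

/-- if a holomorphic `Θ` satisfies the second Plebanski equation
`P(Θ) = 0` on `U`, then the pair `Θ₀ := −∂Θ/∂y`, `Θ₁ := ∂Θ/∂x` satisfies the
hyper-Hermitian equation `E₀ = E₁ = 0` on `U`, and `∂Θ₀/∂x + ∂Θ₁/∂y = 0` on `U`. -/
theorem plebanski_solution_gives_hyperHermitian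
    (U : Set V4) (hU : IsOpen U) (Θ : V4 → ℂ)
    (hΘ : ∀ p ∈ U, AnalyticAt ℂ Θ p)
    (hP : ∀ p ∈ U, pleb Θ p = 0) :
    ∀ p ∈ U,
      hhE (fun q => -(pd eY Θ q)) (pd eX Θ) (fun q => -(pd eY Θ q)) p = 0 ∧
      hhE (fun q => -(pd eY Θ q)) (pd eX Θ) (pd eX Θ) p = 0 ∧
      pd eX (fun q => -(pd eY Θ q)) p + pd eY (pd eX Θ) p = 0 := by
  intro p hp
  have hA : AnalyticAt ℂ Θ p := hΘ p hp
  have hX := analyticAt_pd eX hA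
  have hY := analyticAt_pd eY hA
  have hW := analyticAt_pd eW hA
  have hZ := analyticAt_pd eZ hA
  have hPv : ∀ v, pd v (pd eX (pd eW Θ)) p + pd v (pd eY (pd eZ Θ)) p
      + (pd v (pd eX (pd eX Θ)) p * pd eY (pd eY Θ) p
        + pd eX (pd eX Θ) p * pd v (pd eY (pd eY Θ)) p)
      - 2 * pd eX (pd eY Θ) p * pd v (pd eX (pd eY Θ)) p = 0 := by
    intro v
    have hzero : pd v (pleb Θ) p = 0 := by
      have hev : pleb Θ =ᶠ[nhds p] (fun _ => (0 : ℂ)) :=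
        Filter.eventuallyEq_of_mem (hU.mem_nhds hp) hP
      rw [pd_congr hev v]
      simp [pd]
    rw [← pd_expand v (analyticAt_pd eX hW).differentiableAt
      (analyticAt_pd eY hZ).differentiableAt (analyticAt_pd eX hX).differentiableAt
      (analyticAt_pd eY hY).differentiableAt (analyticAt_pd eX hY).differentiableAt]
    exact hzero
  -- third-derivative identities
  have e1 : pd eX (pd eW (pd eY Θ)) p = pd eY (pd eX (pd eW Θ)) p := by
    rw [pd_congr (pd_comm_ev hA eW eY) eX, pd_comm hW eX eY]
  have e2 : pd eY (pd eZ (pd eY Θ)) p = pd eY (pd eY (pd eZ Θ)) p :=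
    pd_congr (pd_comm_ev hA eZ eY) eY
  have e4 : pd eY (pd eX Θ) p = pd eX (pd eY Θ) p := pd_comm hA eY eX
  have e5 : pd eX (pd eY (pd eY Θ)) p = pd eY (pd eX (pd eY Θ)) p := pd_comm hY eX eY
  have e9 : pd eX (pd eX (pd eY Θ)) p = pd eY (pd eX (pd eX Θ)) p := by
    rw [pd_congr (pd_comm_ev hA eX eY) eX, pd_comm hX eX eY]
  have f1 : pd eX (pd eW (pd eX Θ)) p = pd eX (pd eX (pd eW Θ)) p :=
    pd_congr (pd_comm_ev hA eW eX) eX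
  have f2 : pd eY (pd eZ (pd eX Θ)) p = pd eX (pd eY (pd eZ Θ)) p := by
    rw [pd_congr (pd_comm_ev hA eZ eX) eY, pd_comm hZ eY eX]
  have f3 : pd eX (pd eY (pd eX Θ)) p = pd eX (pd eX (pd eY Θ)) p :=
    pd_congr (pd_comm_ev hA eY eX) eX
  have f4 : pd eY (pd eY (pd eX Θ)) p = pd eX (pd eY (pd eY Θ)) p := by
    rw [pd_congr (pd_comm_ev hA eY eX) eY, pd_comm hY eY eX]
  refine ⟨?_, ?_, ?_⟩
  · simp only [hhE, pd_neg_fun, pd_neg]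
    rw [e1, e2, e4, e5, e9]
    linear_combination -(hPv eY)
  · simp only [hhE, pd_neg_fun, pd_neg]
    rw [f1, f2, f3, f4, e4]
    linear_combination hPv eX
  · simp only [pd_neg_fun]
    rw [e4]
    ring
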